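/- Let G be a plane graph rooted at an edge e, and let T be a spanning tree of G containing e. Then the fundamental cycle basis determined by T is rooted at e (every fundamental cycle contains e) if and only if the set of edges dual to the edges of (G \ T) ∪ {e} forms a Hamiltonian cycle in the dual graph of G. -/

import Mathlib

/-! Multigraphs, given by an endpoint map `ends : E → Sym2 V`, and combinatorial
plane graphs, given by a primal and a dual incidence structure on a common edge
set related by the circuit–bond duality characteristic of planar embeddings. -/

namespace MG

variable {V E : Type*}

/-- Two vertices are related if some edge of `S` joins them. -/
def Rel (ends : E → Sym2 V) (S : Set E) (v w : V) : Prop :=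
  ∃ e ∈ S, ends e = s(v, w)

/-- The edge set `S` connects all vertices of `A` to each other. -/
def ConnOn (ends : E → Sym2 V) (S : Set E) (A : Set V) : Prop :=
  ∀ v ∈ A, ∀ w ∈ A, Relation.ReflTransGen (Rel ends S) v w

/-- The vertices touched by the edge set `S`. -/
def touched (ends : E → Sym2 V) (S : Set E) : Set V :=
  {v | ∃ e ∈ S, v ∈ ends e}

/-- Degree of `v` in the edge set `S`, loops counting twice. -/
noncomputable def deg (ends : E → Sym2 V) (S : Set E) (v : V) : ℕ :=
  {e | e ∈ S ∧ v ∈ ends e ∧ ¬(ends e).IsDiag}.ncard +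
    2 * {e | e ∈ S ∧ ends e = s(v, v)}.ncard

/-- A circuit: a nonempty finite edge set that is connected and in which every
touched vertex has degree exactly two. -/
def IsCircuit (ends : E → Sym2 V) (S : Set E) : Prop :=
  S.Nonempty ∧ S.Finite ∧ ConnOn ends S (touched ends S) ∧
    ∀ v ∈ touched ends S, deg ends S v = 2

/-- An edge cut: the set of all edges with exactly one endpoint in some vertex
set `A`. -/
def IsCut (ends : E → Sym2 V) (S : Set E) : Prop :=
  ∃ A : Set V, ∀ e, e ∈ S ↔ ∃ v ∈ A, ∃ w ∈ Aᶜ, ends e = s(v, w)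

/-- A bond: a minimal nonempty edge cut. -/
def IsBond (ends : E → Sym2 V) (S : Set E) : Prop :=
  S.Nonempty ∧ IsCut ends S ∧
    ∀ S', S'.Nonempty → IsCut ends S' → S' ⊆ S → S' = S

/-- The edge set `S` connects the whole vertex set. -/
def SpanningConn (ends : E → Sym2 V) (S : Set E) : Prop :=
  ConnOn ends S Set.univ

/-- An acyclic edge set: one containing no circuit. -/
def Acyclic (ends : E → Sym2 V) (S : Set E) : Prop :=
  ¬∃ C, C ⊆ S ∧ IsCircuit ends C

/-- A spanning tree: a spanning connected acyclic edge set. -/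
def IsSpanningTree (ends : E → Sym2 V) (S : Set E) : Prop :=
  SpanningConn ends S ∧ Acyclic ends S

/-- A Hamiltonian cycle: a circuit touching every vertex. -/
def IsHamCycle (ends : E → Sym2 V) (S : Set E) : Prop :=
  IsCircuit ends S ∧ touched ends S = Set.univ

end MG

/-- A connected plane graph together with its dual: vertices `V`, faces `F`, and a
common (finite) edge set `E`, with primal endpoints `endsV` and dual endpoints
`endsF`; primal and dual are connected and satisfy the circuit–bond duality that
characterizes planar embeddings (a set of edges is a circuit of one graph exactly
when it is a bond of the other). -/
structure PlaneGraph (V F E : Type*) where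
  endsV : E → Sym2 V
  endsF : E → Sym2 F
  finiteE : Finite E
  connV : MG.SpanningConn endsV Set.univ
  connF : MG.SpanningConn endsF Set.univ
  circuit_bond : ∀ S : Set E, MG.IsCircuit endsV S ↔ MG.IsBond endsF S
  bond_circuit : ∀ S : Set E, MG.IsCircuit endsF S ↔ MG.IsBond endsV S


namespace MGAux

variable {V E : Type*} {ends : E → Sym2 V} {S : Set E}

lemma sym2_rep (z : Sym2 V) : ∃ x y, z = s(x,y) := by
  induction z using Sym2.ind with | _ x y => exact ⟨x, y, rfl⟩

lemma rel_symm : Symmetric (MG.Rel ends S) := by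
  rintro v w ⟨g, hg, hvw⟩; exact ⟨g, hg, by rw [hvw, Sym2.eq_swap]⟩

lemma rtg_symm {v w : V} (h : Relation.ReflTransGen (MG.Rel ends S) v w) :
    Relation.ReflTransGen (MG.Rel ends S) w v :=
  by
  haveI : Std.Symm (MG.Rel ends S) := ⟨fun _ _ h => rel_symm h⟩
  exact (Relation.ReflTransGen.symmetric (r := MG.Rel ends S)).symm _ _ h

lemma rel_mono {S' : Set E} (hS : S ⊆ S') {v w : V} (h : MG.Rel ends S v w) :
    MG.Rel ends S' v w := by obtain ⟨g, hg, h⟩ := h; exact ⟨g, hS hg, h⟩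

lemma rtg_mono {S' : Set E} (hS : S ⊆ S') {v w : V}
    (h : Relation.ReflTransGen (MG.Rel ends S) v w) :
    Relation.ReflTransGen (MG.Rel ends S') v w :=
  Relation.ReflTransGen.mono (fun _ _ => rel_mono hS) _ _ h

open Classical in
noncomputable def dcount (ends : E → Sym2 V) (g : E) (v : V) : ℕ :=
  if ends g = s(v,v) then 2 else if v ∈ ends g then 1 else 0

lemma deg_empty (v : V) : MG.deg ends (∅ : Set E) v = 0 := by
  simp [MG.deg]

lemma deg_insert {g : E} (hg : g ∉ S) (hS : S.Finite) (v : V) :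
    MG.deg ends (insert g S) v = MG.deg ends S v + dcount ends g v := by
  classical
  have h1 : {e | e ∈ insert g S ∧ v ∈ ends e ∧ ¬(ends e).IsDiag}
      = if v ∈ ends g ∧ ¬(ends g).IsDiag then
          insert g {e | e ∈ S ∧ v ∈ ends e ∧ ¬(ends e).IsDiag}
        else {e | e ∈ S ∧ v ∈ ends e ∧ ¬(ends e).IsDiag} := by
    split <;> rename_i hc <;> ext x <;> simp only [Set.mem_setOf_eq, Set.mem_insert_iff] <;>
      constructor
    · rintro ⟨hx | hx, h2⟩
      · exact Or.inl hx
      · exact Or.inr ⟨hx, h2⟩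
    · rintro (rfl | ⟨hx, h2⟩)
      · exact ⟨Or.inl rfl, hc⟩
      · exact ⟨Or.inr hx, h2⟩
    · rintro ⟨hx | hx, h2⟩
      · exact absurd h2 (by rw [hx]; exact hc)
      · exact ⟨hx, h2⟩
    · rintro ⟨hx, h2⟩; exact ⟨Or.inr hx, h2⟩
  have h2 : {e | e ∈ insert g S ∧ ends e = s(v,v)}
      = if ends g = s(v,v) then insert g {e | e ∈ S ∧ ends e = s(v,v)}
        else {e | e ∈ S ∧ ends e = s(v,v)} := by
    split <;> rename_i hc <;> ext x <;> simp only [Set.mem_setOf_eq, Set.mem_insert_iff] <;>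
      constructor
    · rintro ⟨hx | hx, h2⟩
      · exact Or.inl hx
      · exact Or.inr ⟨hx, h2⟩
    · rintro (rfl | ⟨hx, h2⟩)
      · exact ⟨Or.inl rfl, hc⟩
      · exact ⟨Or.inr hx, h2⟩
    · rintro ⟨hx | hx, h2⟩
      · exact absurd (hx ▸ h2) hc
      · exact ⟨hx, h2⟩
    · rintro ⟨hx, h2⟩; exact ⟨Or.inr hx, h2⟩
  have hf1 : {e | e ∈ S ∧ v ∈ ends e ∧ ¬(ends e).IsDiag}.Finite :=
    hS.subset (fun x hx => hx.1)
  have hf2 : {e | e ∈ S ∧ ends e = s(v,v)}.Finite := hS.subset (fun x hx => hx.1)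
  have hg1 : g ∉ {e | e ∈ S ∧ v ∈ ends e ∧ ¬(ends e).IsDiag} := fun h => hg h.1
  have hg2 : g ∉ {e | e ∈ S ∧ ends e = s(v,v)} := fun h => hg h.1
  rw [MG.deg, MG.deg, h1, h2, dcount]
  by_cases hd : ends g = s(v,v)
  · have hnd : ¬(v ∈ ends g ∧ ¬(ends g).IsDiag) := by
      rintro ⟨_, h⟩; exact h (by rw [hd]; exact Sym2.mk_isDiag_iff.2 rfl)
    rw [if_neg hnd, if_pos hd, if_pos hd, Set.ncard_insert_of_notMem hg2 hf2]
    ring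
  · rw [if_neg hd, if_neg hd]
    by_cases hm : v ∈ ends g ∧ ¬(ends g).IsDiag
    · rw [if_pos hm, Set.ncard_insert_of_notMem hg1 hf1, if_pos hm.1]
      ring
    · have : ¬ v ∈ ends g := by
        intro hv
        obtain ⟨x, y, hxy⟩ := sym2_rep (ends g)
        by_cases hdiag : (ends g).IsDiag
        · rw [hxy] at hdiag hv
          obtain rfl := Sym2.mk_isDiag_iff.1 hdiag
          rcases Sym2.mem_iff.1 hv with rfl | rfl <;> exact hd hxy
        · exact hm ⟨hv, hdiag⟩
      rw [if_neg hm, if_neg this]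
      simp
  
lemma deg_eq_zero_of_not_touched {v : V} (h : v ∉ MG.touched ends S) :
    MG.deg ends S v = 0 := by
  have h1 : {e | e ∈ S ∧ v ∈ ends e ∧ ¬(ends e).IsDiag} = ∅ := by
    ext x; simp only [Set.mem_setOf_eq, Set.mem_empty_iff_false, iff_false]
    rintro ⟨hx, hv, _⟩; exact h ⟨x, hx, hv⟩
  have h2 : {e | e ∈ S ∧ ends e = s(v,v)} = ∅ := by
    ext x; simp only [Set.mem_setOf_eq, Set.mem_empty_iff_false, iff_false]
    rintro ⟨hx, hv⟩; exact h ⟨x, hx, by rw [hv]; exact Sym2.mem_mk_left _ _⟩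
  rw [MG.deg, h1, h2]; simp

lemma deg_pos_touched {v : V} (h : 0 < MG.deg ends S v) : v ∈ MG.touched ends S := by
  by_contra hc; rw [deg_eq_zero_of_not_touched hc] at h; omega

lemma touched_finite (hS : S.Finite) : (MG.touched ends S).Finite := by
  have : MG.touched ends S ⊆ ⋃ g ∈ S, {v | v ∈ ends g} := by
    rintro v ⟨g, hg, hv⟩; exact Set.mem_biUnion hg hv
  refine Set.Finite.subset (Set.Finite.biUnion hS (fun g _ => ?_)) this
  obtain ⟨x, y, hxy⟩ := sym2_rep (ends g)
  rw [hxy]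
  have : {v | v ∈ s(x,y)} ⊆ {x, y} := by intro v hv; rcases Sym2.mem_iff.1 hv with rfl|rfl <;> simp
  exact ((Set.finite_singleton y).insert x).subset this

/-- a loop on its own is a circuit -/
lemma loop_circuit {g : E} {u : V} (h : ends g = s(u,u)) :
    MG.IsCircuit ends {g} := by
  have htouch : MG.touched ends {g} = {u} := by
    ext v
    simp only [MG.touched, Set.mem_setOf_eq, Set.mem_singleton_iff]
    constructor
    · rintro ⟨e, rfl, hv⟩; rw [h] at hv; rcases Sym2.mem_iff.1 hv with rfl|rfl <;> rfl
    · rintro rfl; exact ⟨g, rfl, by rw [h]; exact Sym2.mem_mk_left _ _⟩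
  refine ⟨⟨g, rfl⟩, Set.finite_singleton g, ?_, ?_⟩
  · intro v hv w hw
    rw [htouch, Set.mem_singleton_iff] at hv hw
    rw [hv, hw]
  · intro v hv
    rw [htouch, Set.mem_singleton_iff] at hv
    subst hv
    have h1 : {e | e ∈ ({g} : Set E) ∧ v ∈ ends e ∧ ¬(ends e).IsDiag} = ∅ := by
      ext x
      simp only [Set.mem_setOf_eq, Set.mem_singleton_iff, Set.mem_empty_iff_false, iff_false]
      rintro ⟨rfl, _, hd⟩; exact hd (by rw [h]; exact Sym2.mk_isDiag_iff.2 rfl)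
    have h2 : {e | e ∈ ({g} : Set E) ∧ ends e = s(v,v)} = {g} := by
      ext x
      simp only [Set.mem_setOf_eq, Set.mem_singleton_iff]
      constructor
      · rintro ⟨rfl, _⟩; rfl
      · rintro rfl; exact ⟨rfl, h⟩
    rw [MG.deg, h1, h2]; simp

end MGAux

namespace MGAux

variable {V E : Type*} {ends : E → Sym2 V} {S : Set E}

open Relation SimpleGraph

/-- auxiliary simple graph -/
def HG (ends : E → Sym2 V) (S : Set E) : SimpleGraph V := SimpleGraph.fromRel (MG.Rel ends S)

lemma reachable_of_rtg {x y : V} (h : ReflTransGen (MG.Rel ends S) x y) :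
    (HG ends S).Reachable x y := by
  induction h with
  | refl => exact Reachable.refl x
  | tail _ hstep ih =>
    rename_i b c _
    by_cases hbc : b = c
    · exact hbc ▸ ih
    · exact ih.trans (Adj.reachable ((SimpleGraph.fromRel_adj _ _ _).2 ⟨hbc, Or.inl hstep⟩))

lemma adj_edge {x w : V} (h : (HG ends S).Adj x w) : x ≠ w ∧ ∃ g ∈ S, ends g = s(x, w) := by
  rw [HG, SimpleGraph.fromRel_adj] at h
  obtain ⟨hne, h | h⟩ := h
  · exact ⟨hne, h⟩
  · obtain ⟨g, hg, hends⟩ := h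
    exact ⟨hne, g, hg, by rw [hends, Sym2.eq_swap]⟩

open Classical in
lemma walk_edges {x y : V} (p : (HG ends S).Walk x y) (hp : p.IsPath) :
    ∃ Q : Set E, Q.Finite ∧ Q ⊆ S ∧ (∀ g ∈ Q, ∀ v, v ∈ ends g → v ∈ p.support) ∧
      (∀ v ∈ p.support, ReflTransGen (MG.Rel ends Q) x v) ∧
      (∀ v : V, MG.deg ends Q v + (if v = x then 1 else 0) + (if v = y then 1 else 0)
        = if v ∈ p.support then 2 else 0) := by
  classical
  induction p with
  | nil =>
    refine ⟨∅, Set.finite_empty, Set.empty_subset _, by simp, ?_, ?_⟩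
    · intro v hv
      simp only [SimpleGraph.Walk.support_nil, List.mem_singleton] at hv
      exact hv ▸ ReflTransGen.refl
    · intro v
      rw [deg_empty]
      simp only [SimpleGraph.Walk.support_nil, List.mem_singleton]
      split <;> rename_i hvx <;> simp [hvx]
  | cons hadj ptail ih =>
    rename_i a b c
    rw [SimpleGraph.Walk.cons_isPath_iff] at hp
    obtain ⟨hp', hnot⟩ := hp
    obtain ⟨Q', hfin, hsub, htouch, hconn, hdeg⟩ := ih hp'
    obtain ⟨hab, g, hgS, hge⟩ := adj_edge hadj
    have hgQ' : g ∉ Q' := by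
      intro hmem
      exact hnot (htouch g hmem a (by rw [hge]; exact Sym2.mem_mk_left _ _))
    refine ⟨insert g Q', hfin.insert g, Set.insert_subset hgS hsub, ?_, ?_, ?_⟩
    · rintro g' hg' v hv
      rw [SimpleGraph.Walk.support_cons, List.mem_cons]
      rcases hg' with rfl | hg'
      · rw [hge] at hv
        rcases Sym2.mem_iff.1 hv with rfl | rfl
        · exact Or.inl rfl
        · exact Or.inr (SimpleGraph.Walk.start_mem_support _)
      · exact Or.inr (htouch g' hg' v hv)
    · intro v hv
      rw [SimpleGraph.Walk.support_cons, List.mem_cons] at hv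
      rcases hv with rfl | hv
      · exact ReflTransGen.refl
      · exact ReflTransGen.head ⟨g, Set.mem_insert _ _, hge⟩
          (rtg_mono (Set.subset_insert _ _) (hconn v hv))
    · intro v
      have hd := hdeg v
      rw [deg_insert hgQ' hfin]
      simp only [SimpleGraph.Walk.support_cons, List.mem_cons]
      have hdc : dcount ends g v = (if v = a then 1 else 0) + (if v = b then 1 else 0) := by
        rw [dcount, hge]
        have h1 : ¬ s(a,b) = s(v,v) := by
          rw [Sym2.eq_iff]; rintro (⟨rfl, rfl⟩ | ⟨rfl, rfl⟩) <;> exact hab rfl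
        rw [if_neg h1]
        by_cases h2 : v = a <;> by_cases h3 : v = b <;> simp [Sym2.mem_iff, h2, h3] <;>
          first | exact hab | exact fun h => hab h.symm
      have hbmem : b ∈ ptail.support := SimpleGraph.Walk.start_mem_support _
      by_cases h2 : v = a <;> by_cases h4 : v ∈ ptail.support
      · exact absurd (h2 ▸ h4) hnot
      · have h3 : v ≠ b := fun hvb => h4 (by rw [hvb]; exact hbmem)
        have h5 : v ≠ c := fun hvc => h4 (by rw [hvc]; exact SimpleGraph.Walk.end_mem_support _)
        rw [if_neg h3, if_neg h5, if_neg h4] at hd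
        rw [hdc, if_pos h2, if_neg h3, if_neg h5, if_pos (Or.inl h2)]
        omega
      all_goals {
        first
        | (rw [hdc, if_neg h2]
           by_cases h3 : v = b <;> by_cases h5 : v = c <;>
             simp only [h3, h5, if_pos, if_neg, if_true, if_false] <;>
             simp [h2, h3, h5, h4, hbmem] at hd ⊢ <;> omega)
      }

open Classical in
lemma path_to_circuit {x y : V} (hxy : x ≠ y)
    (hconn : ReflTransGen (MG.Rel ends S) x y) {f : E} (hf : f ∉ S)
    (hends : ends f = s(x, y)) :
    ∃ C, C ⊆ insert f S ∧ MG.IsCircuit ends C ∧ f ∈ C := by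
  classical
  obtain ⟨w⟩ := reachable_of_rtg hconn
  obtain ⟨Q, hfin, hsub, htouch, hconnQ, hdeg⟩ := walk_edges (w.toPath : (HG ends S).Walk x y) (w.toPath).2
  set p := (w.toPath : (HG ends S).Walk x y) with hp
  have hfQ : f ∉ Q := fun h => hf (hsub h)
  refine ⟨insert f Q, Set.insert_subset_insert hsub, ⟨⟨f, Set.mem_insert _ _⟩,
    hfin.insert f, ?_, ?_⟩, Set.mem_insert _ _⟩
  · -- connectivity on touched
    have key : ∀ v ∈ MG.touched ends (insert f Q),
        ReflTransGen (MG.Rel ends (insert f Q)) x v := by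
      rintro v ⟨g, hg, hv⟩
      rcases hg with rfl | hg
      · rw [hends] at hv
        rcases Sym2.mem_iff.1 hv with rfl | rfl
        · exact ReflTransGen.refl
        · exact ReflTransGen.single ⟨g, Set.mem_insert _ _, hends⟩
      · exact rtg_mono (Set.subset_insert _ _)
          (hconnQ v (htouch g hg v hv))
    intro v hv u hu
    exact (rtg_symm (key v hv)).trans (key u hu)
  · intro v hv
    have hdc : dcount ends f v = (if v = x then 1 else 0) + (if v = y then 1 else 0) := by
      rw [dcount, hends]
      have h1 : ¬ s(x,y) = s(v,v) := by
        rw [Sym2.eq_iff]; rintro (⟨rfl, rfl⟩ | ⟨rfl, rfl⟩) <;> exact hxy rfl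
      rw [if_neg h1]
      by_cases h2 : v = x <;> by_cases h3 : v = y <;> simp [Sym2.mem_iff, h2, h3] <;>
        first | exact hxy | exact fun h => hxy h.symm
    have hsupp : v ∈ p.support := by
      obtain ⟨g, hg, hvg⟩ := hv
      rcases hg with rfl | hg
      · rw [hends] at hvg
        rcases Sym2.mem_iff.1 hvg with rfl | rfl
        · exact SimpleGraph.Walk.start_mem_support _
        · exact SimpleGraph.Walk.end_mem_support _
      · exact htouch g hg v hvg
    have hd := hdeg v
    rw [if_pos hsupp] at hd
    rw [deg_insert hfQ hfin, hdc]
    omega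

end MGAux

namespace MGAux

variable {V E : Type*} {ends : E → Sym2 V} {S : Set E}

open Relation

open Classical in
lemma deg_eq_sum_finset (s : Finset E) (v : V) :
    MG.deg ends (↑s) v = ∑ g ∈ s, dcount ends g v := by
  classical
  induction s using Finset.induction_on with
  | empty => simp [deg_empty]
  | @insert g s' hgs' ih =>
    rw [Finset.coe_insert, deg_insert (by simpa using hgs') (Finset.finite_toSet s'), ih,
      Finset.sum_insert hgs']
    ring

open Classical in
lemma deg_eq_sum (hS : S.Finite) (v : V) :
    MG.deg ends S v = ∑ g ∈ hS.toFinset, dcount ends g v := by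
  have h := deg_eq_sum_finset (ends := ends) hS.toFinset v
  rwa [Set.Finite.coe_toFinset] at h

open Classical in
lemma even_crossings (hS : S.Finite) (A : Set V)
    (hdeg : ∀ v ∈ MG.touched ends S, Even (MG.deg ends S v)) :
    Even {g | g ∈ S ∧ ∃ v ∈ A, ∃ w ∈ Aᶜ, ends g = s(v, w)}.ncard := by
  classical
  set cross : E → Prop := fun g => ∃ v ∈ A, ∃ w ∈ Aᶜ, ends g = s(v, w) with hcross
  have htf : (MG.touched ends S ∩ A).Finite := (touched_finite hS).inter_of_left A
  set t : Finset V := htf.toFinset with ht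
  set s : Finset E := hS.toFinset with hs
  -- total degree sum over t is even
  have heven : Even (∑ v ∈ t, MG.deg ends S v) := by
    apply Finset.even_sum
    intro v hv
    exact hdeg v (by simp only [ht, Set.Finite.mem_toFinset] at hv; exact hv.1)
  have hswap : ∑ v ∈ t, MG.deg ends S v = ∑ g ∈ s, ∑ v ∈ t, dcount ends g v := by
    rw [Finset.sum_comm]
    exact Finset.sum_congr rfl fun v _ => deg_eq_sum hS v
  -- inner sums mod 2
  have hinner : ∀ g ∈ s, ((∑ v ∈ t, dcount ends g v : ℕ) : ZMod 2)
      = if cross g then 1 else 0 := by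
    intro g hg
    have hgS : g ∈ S := by simpa [hs] using hg
    obtain ⟨a, b, hab⟩ := sym2_rep (ends g)
    by_cases hd : a = b
    · subst hd
      have h1 : ∀ v ∈ t, dcount ends g v = if v = a then 2 else 0 := by
        intro v _
        rw [dcount, hab]
        by_cases h2 : v = a
        · subst h2; rw [if_pos rfl, if_pos rfl]
        · rw [if_neg (by rw [Sym2.eq_iff]; tauto), if_neg (by rw [Sym2.mem_iff]; tauto),
            if_neg h2]
      have hnc : ¬ cross g := by
        rintro ⟨v, hv, w, hw, hvw⟩
        rw [hab, Sym2.eq_iff] at hvw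
        rcases hvw with ⟨rfl, rfl⟩ | ⟨rfl, rfl⟩ <;> exact hw hv
      rw [Finset.sum_congr rfl h1, Finset.sum_ite_eq' t a (fun _ => 2), if_neg hnc]
      split <;> simp <;> decide
    · have h1 : ∀ v ∈ t, dcount ends g v
          = (if v = a then 1 else 0) + (if v = b then 1 else 0) := by
        intro v _
        rw [dcount, hab]
        have hne : ¬ s(a,b) = s(v,v) := by
          rw [Sym2.eq_iff]; rintro (⟨rfl, rfl⟩ | ⟨rfl, rfl⟩) <;> exact hd rfl
        rw [if_neg hne]
        by_cases h2 : v = a <;> by_cases h3 : v = b <;>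
          simp [Sym2.mem_iff, h2, h3] <;> first | exact hd | exact fun h => hd h.symm
      have hat : a ∈ t ↔ a ∈ A := by
        simp only [ht, Set.Finite.mem_toFinset, Set.mem_inter_iff, and_iff_right_iff_imp]
        intro _; exact ⟨g, hgS, by rw [hab]; exact Sym2.mem_mk_left _ _⟩
      have hbt : b ∈ t ↔ b ∈ A := by
        simp only [ht, Set.Finite.mem_toFinset, Set.mem_inter_iff, and_iff_right_iff_imp]
        intro _; exact ⟨g, hgS, by rw [hab]; exact Sym2.mem_mk_right _ _⟩
      have hcr : cross g ↔ ((a ∈ A ∧ b ∉ A) ∨ (b ∈ A ∧ a ∉ A)) := by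
        constructor
        · rintro ⟨v, hv, w, hw, hvw⟩
          rw [hab, Sym2.eq_iff] at hvw
          rcases hvw with ⟨rfl, rfl⟩ | ⟨rfl, rfl⟩
          · exact Or.inl ⟨hv, hw⟩
          · exact Or.inr ⟨hv, hw⟩
        · rintro (⟨h1', h2'⟩ | ⟨h1', h2'⟩)
          · exact ⟨a, h1', b, h2', hab⟩
          · exact ⟨b, h1', a, h2', by rw [hab, Sym2.eq_swap]⟩
      rw [Finset.sum_congr rfl h1, Finset.sum_add_distrib,
        Finset.sum_ite_eq' t a (fun _ => 1), Finset.sum_ite_eq' t b (fun _ => 1)]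
      by_cases h2 : a ∈ A <;> by_cases h3 : b ∈ A <;>
        simp [hat, hbt, h2, h3, hcr] <;> decide
  -- conclude
  have h0 : ((∑ g ∈ s, ∑ v ∈ t, dcount ends g v : ℕ) : ZMod 2) = 0 := by
    rw [← hswap]
    exact (ZMod.natCast_eq_zero_iff _ 2).2 heven.two_dvd
  rw [Nat.cast_sum, Finset.sum_congr rfl hinner, Finset.sum_boole] at h0
  have hdvd : (2 : ℕ) ∣ (s.filter cross).card :=
    (ZMod.natCast_eq_zero_iff _ 2).1 h0
  have hset : {g | g ∈ S ∧ cross g} = ↑(s.filter cross) := by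
    ext g; simp [hs]
  rw [hset, Set.ncard_coe_finset]
  obtain ⟨k, hk⟩ := hdvd
  exact ⟨k, by omega⟩

/-- every nonempty cut contains a bond (assuming finitely many edges) -/
lemma cut_contains_bond [Finite E] (hS : MG.IsCut ends S) (hne : S.Nonempty) :
    ∃ B ⊆ S, MG.IsBond ends B := by
  classical
  set 𝒞 : Set (Set E) := {S' | S' ⊆ S ∧ S'.Nonempty ∧ MG.IsCut ends S'} with h𝒞
  have hSmem : S ∈ 𝒞 := ⟨subset_rfl, hne, hS⟩
  obtain ⟨B, hB, hmin⟩ := Set.Finite.exists_minimalFor (fun X => X.ncard) 𝒞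
    (Set.toFinite 𝒞) ⟨S, hSmem⟩
  refine ⟨B, hB.1, hB.2.1, hB.2.2, ?_⟩
  intro S' hne' hcut' hsub'
  have hS'mem : S' ∈ 𝒞 := ⟨hsub'.trans hB.1, hne', hcut'⟩
  have hle : B.ncard ≤ S'.ncard := by
    by_contra hlt
    push_neg at hlt
    have : B.ncard ≤ S'.ncard := hmin hS'mem (le_of_lt hlt)
    omega
  exact Set.eq_of_subset_of_ncard_le hsub' hle (Set.toFinite B)

/-- from a walk leaving a vertex, extract a non-loop edge at that vertex -/
lemma exists_nonloop_at {U : Set E} {φ ψ : V} (h : ReflTransGen (MG.Rel ends U) φ ψ)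
    (hne : φ ≠ ψ) : ∃ g ∈ U, φ ∈ ends g ∧ ¬(ends g).IsDiag := by
  induction h using Relation.ReflTransGen.head_induction_on with
  | refl => exact absurd rfl hne
  | head hstep htail ih =>
    rename_i a c
    obtain ⟨g, hg, hends⟩ := hstep
    by_cases hac : a = c
    · subst hac
      exact ih hne
    · exact ⟨g, hg, by rw [hends]; exact Sym2.mem_mk_left _ _,
        by rw [hends]; exact fun h => hac (Sym2.mk_isDiag_iff.1 h)⟩

end MGAux

/-- Let `G` be a plane graph rooted at the edge `e` and `T` a
spanning tree of `G` containing `e`. The fundamental cycle basis of `T` is rooted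
at `e` (every fundamental cycle — i.e., every circuit consisting of a non-tree
edge `f` together with tree edges — contains `e`) if and only if the edges dual to
`(G \ T) ∪ {e}` form a Hamiltonian cycle of the dual graph. -/
theorem stmt10 {V F E : Type*} (P : PlaneGraph V F E) (T : Set E)
    (hT : MG.IsSpanningTree P.endsV T) (e : E) (he : e ∈ T) :
    (∀ f ∉ T, ∀ C : Set E, C ⊆ insert f T → MG.IsCircuit P.endsV C → f ∈ C →
        e ∈ C) ↔
      MG.IsHamCycle P.endsF (Tᶜ ∪ {e}) := by
  classical
  obtain ⟨hTconn, hTacyc⟩ := hT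
  have hEfin : Finite E := P.finiteE
  set n := P.endsV with hn
  set D : Set E := Tᶜ ∪ {e} with hD
  have heD : e ∈ D := Or.inr rfl
  obtain ⟨x₀, y₀, hxy⟩ := MGAux.sym2_rep (n e)
  have hx0y0 : x₀ ≠ y₀ := by
    rintro rfl
    exact hTacyc ⟨{e}, Set.singleton_subset_iff.2 he, MGAux.loop_circuit hxy⟩
  constructor
  · -- forward direction
    intro h
    set R := MG.Rel n (T \ {e}) with hR
    set A : Set V := {v | Relation.ReflTransGen R x₀ v} with hA
    have heTe : e ∉ T \ {e} := fun hc => hc.2 rfl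
    have hTeT : insert e (T \ {e}) ⊆ T := by
      rw [Set.insert_diff_singleton]
      exact Set.insert_subset he subset_rfl
    have hsep : ¬ Relation.ReflTransGen R x₀ y₀ := by
      intro hcon
      obtain ⟨C, hCsub, hCcirc, heC⟩ := MGAux.path_to_circuit hx0y0 hcon
        (f := e) heTe hxy
      exact hTacyc ⟨C, hCsub.trans hTeT, hCcirc⟩
    have hcover : ∀ v : V,
        Relation.ReflTransGen R x₀ v ∨ Relation.ReflTransGen R y₀ v := by
      intro v
      have hvx : Relation.ReflTransGen (MG.Rel n T) v x₀ :=
        hTconn v trivial x₀ trivial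
      induction hvx using Relation.ReflTransGen.head_induction_on with
      | refl => exact Or.inl .refl
      | head hstep htail ih =>
        rename_i a c
        obtain ⟨g, hg, hvw⟩ := hstep
        by_cases hge : g = e
        · subst hge
          rw [hxy, Sym2.eq_iff] at hvw
          rcases hvw with ⟨rfl, rfl⟩ | ⟨rfl, rfl⟩
          · exact Or.inl .refl
          · exact Or.inr .refl
        · have hrel : R a c := ⟨g, ⟨hg, hge⟩, hvw⟩
          rcases ih with h' | h'
          · exact Or.inl (h'.tail (MGAux.rel_symm hrel))
          · exact Or.inr (h'.tail (MGAux.rel_symm hrel))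
    have hBof : ∀ v, v ∉ A → Relation.ReflTransGen R y₀ v := fun v hv =>
      (hcover v).resolve_left hv
    have hnotB : ∀ v, Relation.ReflTransGen R x₀ v →
        Relation.ReflTransGen R y₀ v → False := fun v h1 h2 =>
      hsep (h1.trans (MGAux.rtg_symm h2))
    -- tree edges do not cross A
    have htree_nocross : ∀ g ∈ T \ {e}, ∀ v w, n g = s(v, w) → (v ∈ A ↔ w ∈ A) := by
      intro g hg v w hvw
      have hrel : R v w := ⟨g, hg, hvw⟩
      exact ⟨fun hv => hv.tail hrel, fun hw => hw.tail (MGAux.rel_symm hrel)⟩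
    -- the cut characterization
    have hchar : ∀ g, g ∈ D ↔ ∃ v ∈ A, ∃ w ∈ Aᶜ, n g = s(v, w) := by
      intro g
      constructor
      · rintro (hgT | hge)
        · -- non-tree edge
          obtain ⟨u, v, huv⟩ := MGAux.sym2_rep (n g)
          by_cases huvne : u = v
          · subst huvne
            exact absurd (h g hgT {g} (Set.singleton_subset_iff.2 (Set.mem_insert _ _))
              (MGAux.loop_circuit huv) rfl) (by simp; rintro rfl; exact hgT he)
          · have hgTe : g ∉ T \ {e} := fun hc => hgT hc.1
            have hcontra : ¬ Relation.ReflTransGen R u v := by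
              intro hcon
              obtain ⟨C, hCsub, hCcirc, hgC⟩ := MGAux.path_to_circuit huvne hcon hgTe huv
              have heC := h g hgT C
                (hCsub.trans (Set.insert_subset_insert (Set.diff_subset)))
                hCcirc hgC
              rcases hCsub heC with rfl | hc
              · exact hgT he
              · exact hc.2 rfl
            by_cases hu : u ∈ A <;> by_cases hv : v ∈ A
            · exact absurd ((MGAux.rtg_symm hu).trans hv) hcontra
            · exact ⟨u, hu, v, hv, huv⟩
            · exact ⟨v, hv, u, hu, by rw [huv, Sym2.eq_swap]⟩
            · exact absurd ((MGAux.rtg_symm (hBof u hu)).trans (hBof v hv)) hcontra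
        · -- the edge e itself
          rw [Set.mem_singleton_iff] at hge
          subst hge
          exact ⟨x₀, Relation.ReflTransGen.refl, y₀, hsep, hxy⟩
      · rintro ⟨v, hv, w, hw, hvw⟩
        by_cases hge : g = e
        · exact Or.inr (hge ▸ rfl)
        · left
          intro hgT
          exact hw ((htree_nocross g ⟨hgT, hge⟩ v w hvw).1 hv)
    have hDcut : MG.IsCut n D := ⟨A, hchar⟩
    -- minimality
    have hDbond : MG.IsBond n D := by
      refine ⟨⟨e, heD⟩, hDcut, ?_⟩
      intro S' hne' hcut' hsub'
      obtain ⟨A', hA'⟩ := hcut'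
      have hstep : ∀ g ∉ S', ∀ v w, n g = s(v, w) → (v ∈ A' ↔ w ∈ A') := by
        intro g hg v w hvw
        constructor
        · intro hv; by_contra hw; exact hg ((hA' g).2 ⟨v, hv, w, hw, hvw⟩)
        · intro hw; by_contra hv
          exact hg ((hA' g).2 ⟨w, hw, v, hv, by rw [hvw, Sym2.eq_swap]⟩)
      have htreeInv : ∀ v w, Relation.ReflTransGen R v w → (v ∈ A' ↔ w ∈ A') := by
        intro v w hvw
        induction hvw with
        | refl => exact Iff.rfl
        | tail _ hrel ih =>
          obtain ⟨g, hg, hvw'⟩ := hrel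
          have hgD : g ∉ D := by
            rintro (hc | hc)
            · exact hc hg.1
            · exact hg.2 hc
          exact ih.trans (hstep g (fun hc => hgD (hsub' hc)) _ _ hvw')
      have hAside : ∀ v ∈ A, (v ∈ A' ↔ x₀ ∈ A') := fun v hv => (htreeInv x₀ v hv).symm
      have hBside : ∀ v, v ∉ A → (v ∈ A' ↔ y₀ ∈ A') := fun v hv =>
        (htreeInv y₀ v (hBof v hv)).symm
      by_cases hsame : (x₀ ∈ A') ↔ (y₀ ∈ A')
      · exfalso
        obtain ⟨g, hg⟩ := hne'
        obtain ⟨v, hv, w, hw, hvw⟩ := (hchar g).1 (hsub' hg)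
        obtain ⟨v', hv', w', hw', hvw'⟩ := (hA' g).1 hg
        have hiff : v ∈ A' ↔ w ∈ A' :=
          (hAside v hv).trans (hsame.trans (hBside w hw).symm)
        rw [hvw] at hvw'
        rw [Sym2.eq_iff] at hvw'
        rcases hvw' with ⟨rfl, rfl⟩ | ⟨rfl, rfl⟩
        · exact hw' (hiff.1 hv')
        · exact hw' (hiff.2 hv')
      · apply Set.Subset.antisymm hsub'
        intro g hgD
        obtain ⟨v, hv, w, hw, hvw⟩ := (hchar g).1 hgD
        by_cases hx' : x₀ ∈ A'
        · have hv' : v ∈ A' := (hAside v hv).2 hx'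
          have hw' : w ∉ A' := fun hw' =>
            hsame ⟨fun _ => (hBside w hw).1 hw', fun _ => hx'⟩
          exact (hA' g).2 ⟨v, hv', w, hw', hvw⟩
        · have hy' : y₀ ∈ A' := by
            by_contra hy'
            exact hsame ⟨fun hc => (hx' hc).elim, fun hc => (hy' hc).elim⟩
          have hw' : w ∈ A' := (hBside w hw).2 hy'
          have hv' : v ∉ A' := fun hv' => hx' ((hAside v hv).1 hv')
          exact (hA' g).2 ⟨w, hw', v, hv', by rw [hvw, Sym2.eq_swap]⟩
    refine ⟨(P.bond_circuit D).2 hDbond, ?_⟩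
    -- touched = univ
    ext φ
    simp only [Set.mem_univ, iff_true]
    by_contra hφ
    by_cases hsing : ∀ ψ : F, ψ = φ
    · obtain ⟨a, b, hab⟩ := MGAux.sym2_rep (P.endsF e)
      refine hφ ⟨e, heD, ?_⟩
      rw [hab]
      have : a = φ := hsing a
      subst this
      exact Sym2.mem_mk_left _ _
    · push_neg at hsing
      obtain ⟨ψ, hψ⟩ := hsing
      have hrtg : Relation.ReflTransGen (MG.Rel P.endsF Set.univ) φ ψ :=
        P.connF φ trivial ψ trivial
      obtain ⟨g, -, hg1, hg2⟩ := MGAux.exists_nonloop_at hrtg (Ne.symm hψ)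
      set S₀ : Set E :=
        {g' | ∃ v ∈ ({φ} : Set F), ∃ w ∈ ({φ} : Set F)ᶜ, P.endsF g' = s(v, w)} with hS₀
      have hcut₀ : MG.IsCut P.endsF S₀ := ⟨{φ}, fun _ => Iff.rfl⟩
      have hg₀ : g ∈ S₀ := by
        obtain ⟨a, b, hab⟩ := MGAux.sym2_rep (P.endsF g)
        rw [hab] at hg1 hg2
        rcases Sym2.mem_iff.1 hg1 with h1 | h1
        · exact ⟨φ, rfl, b, fun hb => hg2 (Sym2.mk_isDiag_iff.2
            (h1.symm.trans (Set.mem_singleton_iff.1 hb).symm)), by rw [hab, h1]⟩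
        · exact ⟨φ, rfl, a, fun ha => hg2 (Sym2.mk_isDiag_iff.2
            ((Set.mem_singleton_iff.1 ha).trans h1)), by rw [hab, h1, Sym2.eq_swap]⟩
      obtain ⟨B₀, hB₀sub, hB₀bond⟩ := MGAux.cut_contains_bond hcut₀ ⟨g, hg₀⟩
      have hcirc := (P.circuit_bond B₀).2 hB₀bond
      refine hTacyc ⟨B₀, ?_, hcirc⟩
      intro g' hg'
      obtain ⟨v, hv, w, hw, hvw⟩ := hB₀sub hg'
      rw [Set.mem_singleton_iff] at hv
      have hmem : φ ∈ P.endsF g' := by rw [hvw, ← hv]; exact Sym2.mem_mk_left _ _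
      have hg'D : g' ∉ D := fun hmemD => hφ ⟨g', hmemD, hmem⟩
      rw [hD, Set.mem_union] at hg'D
      push_neg at hg'D
      have := hg'D.1
      rwa [Set.notMem_compl_iff] at this
  · -- backward direction
    rintro ⟨hcirc, -⟩
    have hDbond := (P.bond_circuit D).1 hcirc
    obtain ⟨-, ⟨A, hA⟩, -⟩ := hDbond
    intro f hf C hCsub hCcirc hfC
    by_contra heC
    have heven := MGAux.even_crossings hCcirc.2.1 A
      (fun v hv => by rw [hCcirc.2.2.2 v hv]; exact even_two)
    have hset : {g | g ∈ C ∧ ∃ v ∈ A, ∃ w ∈ Aᶜ, n g = s(v, w)} = {f} := by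
      ext g
      simp only [Set.mem_setOf_eq, Set.mem_singleton_iff]
      constructor
      · rintro ⟨hgC, hcr⟩
        rcases (hA g).2 hcr with hgTc | hge
        · rcases hCsub hgC with rfl | hgT
          · rfl
          · exact absurd hgT hgTc
        · rw [Set.mem_singleton_iff] at hge
          exact absurd (hge ▸ hgC) heC
      · rintro rfl
        exact ⟨hfC, (hA _).1 (Or.inl hf)⟩
    rw [hset, Set.ncard_singleton] at heven
    simp at heven
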